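/- Suppose each f_j is σ-strongly convex (σ > 0) and twice continuously differentiable, and let d(x^k) denote the unique global minimizer of d ↦ Q(x^k,d). If the sequence {x^k} ⊂ ℝⁿ converges to x* and the sequence {d(x^k)} converges to d*, then d* = d(x*), the unique global minimizer of d ↦ Q(x*,d). -/

import Mathlib

open Filter Topology Finset
open scoped RealInnerProductSpace

noncomputable section

/-- One-sided directional derivative: `c = F'(x; d) = lim_{α→0⁺} (F(x+αd) − F(x))/α`. -/
def HasDirDeriv {n : ℕ} (F : EuclideanSpace ℝ (Fin n) → ℝ)
    (x d : EuclideanSpace ℝ (Fin n)) (c : ℝ) : Prop :=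
  Filter.Tendsto (fun α : ℝ => (F (x + α • d) - F x) / α) (nhdsWithin 0 (Set.Ioi 0)) (nhds c)

/-- Subdifferential of a convex function: `∂h(x) = {ξ : h(y) ≥ h(x) + ⟪ξ, y − x⟫ ∀ y}`. -/
def subdiff {n : ℕ} (h : EuclideanSpace ℝ (Fin n) → ℝ) (x : EuclideanSpace ℝ (Fin n)) :
    Set (EuclideanSpace ℝ (Fin n)) :=
  {ξ | ∀ y, h x + ⟪ξ, y - x⟫ ≤ h y}

/-- `σ`-strong convexity: `f(αx+(1−α)y) ≤ αf(x)+(1−α)f(y) − (σ/2)α(1−α)‖x−y‖²`. -/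
def StronglyConvexFun {n : ℕ} (σ : ℝ) (f : EuclideanSpace ℝ (Fin n) → ℝ) : Prop :=
  ∀ x y : EuclideanSpace ℝ (Fin n), ∀ α : ℝ, 0 ≤ α → α ≤ 1 →
    f (α • x + (1 - α) • y) ≤ α * f x + (1 - α) * f y - σ / 2 * α * (1 - α) * ‖x - y‖ ^ 2

/-- `Q_j(x,d) = ∇f_j(x)ᵀd + ½ dᵀ∇²f_j(x)d + g_j(x+d) − g_j(x)`, where the Hessian is
the Fréchet derivative of the gradient. -/
def Qj {n m : ℕ} (f g : Fin (m + 1) → EuclideanSpace ℝ (Fin n) → ℝ)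
    (j : Fin (m + 1)) (x d : EuclideanSpace ℝ (Fin n)) : ℝ :=
  ⟪gradient (f j) x, d⟫ + (1 / 2) * ⟪(fderiv ℝ (gradient (f j)) x) d, d⟫
    + g j (x + d) - g j x

/-- `Q(x,d) = max_{1 ≤ j ≤ m} Q_j(x,d)`. -/
def Qmax {n m : ℕ} (f g : Fin (m + 1) → EuclideanSpace ℝ (Fin n) → ℝ)
    (x d : EuclideanSpace ℝ (Fin n)) : ℝ :=
  Finset.univ.sup' Finset.univ_nonempty (fun j => Qj f g j x d)

set_option maxHeartbeats 1000000 in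
/-- if each `f_j` is `σ`-strongly convex and twice continuously
differentiable, `d(·)` maps each point to the unique global minimizer of `d ↦ Q(·,d)`,
`x^k → x*` and `d(x^k) → d*`, then `d* = d(x*)`. -/
theorem limit_of_minimizers {n m : ℕ} (σ : ℝ) (hσ : 0 < σ)
    (f g : Fin (m + 1) → EuclideanSpace ℝ (Fin n) → ℝ)
    (hfsc : ∀ j, StronglyConvexFun σ (f j))
    (hfC2 : ∀ j, ContDiff ℝ 2 (f j))
    (hgconv : ∀ j, ConvexOn ℝ Set.univ (g j))
    (hgcont : ∀ j, Continuous (g j))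
    (dmap : EuclideanSpace ℝ (Fin n) → EuclideanSpace ℝ (Fin n))
    (hdmin : ∀ y d, Qmax f g y (dmap y) ≤ Qmax f g y d)
    (hduniq : ∀ y d, (∀ d', Qmax f g y d ≤ Qmax f g y d') → d = dmap y)
    (xseq : ℕ → EuclideanSpace ℝ (Fin n)) (xstar dstar : EuclideanSpace ℝ (Fin n))
    (hx : Tendsto xseq atTop (nhds xstar))
    (hd : Tendsto (fun k => dmap (xseq k)) atTop (nhds dstar)) :
    dstar = dmap xstar := by
  -- continuity of `Qmax` in the pair `(x, d)`
  have hQjcont : ∀ j, Continuous (fun p : EuclideanSpace ℝ (Fin n) × EuclideanSpace ℝ (Fin n) =>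
      Qj f g j p.1 p.2) := by
    intro j
    have hgrad : ContDiff ℝ 1 (gradient (f j)) := by
      have h1 : ContDiff ℝ 1 (fderiv ℝ (f j)) :=
        (hfC2 j).fderiv_right (by norm_num)
      have := ((InnerProductSpace.toDual ℝ (EuclideanSpace ℝ (Fin n))).symm.contDiff).comp h1
      exact this
    have hgc : Continuous (gradient (f j)) := hgrad.continuous
    have hfd : Continuous (fderiv ℝ (gradient (f j))) := hgrad.continuous_fderiv one_ne_zero
    unfold Qj
    have h1 : Continuous (fun p : EuclideanSpace ℝ (Fin n) × EuclideanSpace ℝ (Fin n) =>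
        ⟪gradient (f j) p.1, p.2⟫) := (hgc.comp continuous_fst).inner continuous_snd
    have h2 : Continuous (fun p : EuclideanSpace ℝ (Fin n) × EuclideanSpace ℝ (Fin n) =>
        ⟪(fderiv ℝ (gradient (f j)) p.1) p.2, p.2⟫) :=
      (((hfd.comp continuous_fst).clm_apply continuous_snd).inner continuous_snd)
    exact ((h1.add (continuous_const.mul h2)).add
      ((hgcont j).comp (continuous_fst.add continuous_snd))).sub
      ((hgcont j).comp continuous_fst)
  have hQcont : Continuous (fun p : EuclideanSpace ℝ (Fin n) × EuclideanSpace ℝ (Fin n) =>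
      Qmax f g p.1 p.2) := by
    unfold Qmax
    exact Continuous.finset_sup'_apply Finset.univ_nonempty (fun j _ => hQjcont j)
  -- pass to the limit in the minimality inequality
  refine hduniq xstar dstar (fun d' => ?_)
  have hpair : Tendsto (fun k => (xseq k, dmap (xseq k))) atTop (nhds (xstar, dstar)) :=
    hx.prodMk_nhds hd
  have hpair' : Tendsto (fun k => (xseq k, d')) atTop (nhds (xstar, d')) :=
    hx.prodMk_nhds tendsto_const_nhds
  have hL : Tendsto (fun k => Qmax f g (xseq k) (dmap (xseq k))) atTop
      (nhds (Qmax f g xstar dstar)) := by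
    have := (hQcont.tendsto (xstar, dstar)).comp hpair
    simpa only [Function.comp_def] using this
  have hR : Tendsto (fun k => Qmax f g (xseq k) d') atTop
      (nhds (Qmax f g xstar d')) := by
    have := (hQcont.tendsto (xstar, d')).comp hpair'
    simpa only [Function.comp_def] using this
  exact le_of_tendsto_of_tendsto' hL hR (fun k => hdmin (xseq k) d')
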